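/- Let k ≥ 2, let f ∈ C^k([0,l]) with 0 ≤ l ≤ 1, let σ_1, …, σ_{k−1} ∈ {±1}, and let ε > 0, κ > 0. Assume σ_j f^{(j)}(0) ≥ −ε and σ_j f^{(j)}(l) ≥ −ε for every 1 ≤ j ≤ k−1, and |f^{(k)}(t)| ≥ κ for all t ∈ [0,l]. Then either σ_1 f′(t) ≥ κ t^{k−1}/(k−1)! − (k−1)ε for all t ∈ [0,l], or σ_1 f′(t) ≥ κ (l−t)^{k−1}/(k−1)! − (k−1)ε for all t ∈ [0,l]. -/

import Mathlib

open Set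

lemma mono_aux {l : ℝ} {g g' φ φ' : ℝ → ℝ}
    (hg : ∀ t ∈ Icc 0 l, HasDerivWithinAt g (g' t) (Icc 0 l) t)
    (hφ : ∀ t ∈ Icc 0 l, HasDerivWithinAt φ (φ' t) (Icc 0 l) t)
    (hle : ∀ t ∈ Icc 0 l, φ' t ≤ g' t) :
    MonotoneOn (fun t => g t - φ t) (Icc 0 l) := by
  apply monotoneOn_of_hasDerivWithinAt_nonneg (f' := fun t => g' t - φ' t) (convex_Icc 0 l)
  · exact fun t ht => ((hg t ht).sub (hφ t ht)).continuousWithinAt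
  · intro t ht
    have ht' : t ∈ Icc 0 l := interior_subset ht
    exact ((hg t ht').sub (hφ t ht')).mono interior_subset
  · exact fun t ht => sub_nonneg.2 (hle t (interior_subset ht))

lemma deriv_P1 (κ ε : ℝ) (m : ℕ) (t : ℝ) :
    HasDerivAt (fun x : ℝ => κ * x ^ (m+1) / (m+1).factorial - (m:ℝ) * ε * x)
      (κ * t ^ m / m.factorial - (m:ℝ) * ε) t := by
  have h1 : HasDerivAt (fun x : ℝ => κ * x ^ (m+1) / (m+1).factorial - (m:ℝ) * ε * x)
      (κ * (((m:ℝ)+1) * t ^ m) / (m+1).factorial - (m:ℝ) * ε * 1) t := by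
    have hp : HasDerivAt (fun x : ℝ => x ^ (m+1)) (((m:ℝ)+1) * t ^ m) t := by
      simpa using hasDerivAt_pow (m+1) t
    exact (((hp.const_mul κ).div_const _)).sub ((hasDerivAt_id t).const_mul ((m:ℝ) * ε))
  convert h1 using 1
  have hm : ((m+1).factorial : ℝ) = ((m:ℝ)+1) * (m.factorial : ℝ) := by
    rw [Nat.factorial_succ]; push_cast; ring
  have h0 : (m.factorial : ℝ) ≠ 0 := by positivity
  have h0' : ((m:ℝ)+1) ≠ 0 := by positivity
  rw [hm]; field_simp

lemma deriv_P2 (κ ε l : ℝ) (m : ℕ) (t : ℝ) :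
    HasDerivAt (fun x : ℝ => -(κ * (l - x) ^ (m+1) / (m+1).factorial) - (m:ℝ) * ε * x)
      (κ * (l - t) ^ m / m.factorial - (m:ℝ) * ε) t := by
  have hp : HasDerivAt (fun x : ℝ => (l - x) ^ (m+1)) (((m:ℝ)+1) * (l-t) ^ m * (-1)) t := by
    have hi : HasDerivAt (fun x : ℝ => l - x) (-1) t := (hasDerivAt_id t).const_sub l
    simpa using hi.fun_pow (m+1)
  have h1 : HasDerivAt (fun x : ℝ => -(κ * (l - x) ^ (m+1) / (m+1).factorial) - (m:ℝ) * ε * x)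
      (-(κ * (((m:ℝ)+1) * (l-t) ^ m * (-1)) / (m+1).factorial) - (m:ℝ) * ε * 1) t :=
    ((hp.const_mul κ).div_const _).neg.sub ((hasDerivAt_id t).const_mul ((m:ℝ) * ε))
  convert h1 using 1
  have hm : ((m+1).factorial : ℝ) = ((m:ℝ)+1) * (m.factorial : ℝ) := by
    rw [Nat.factorial_succ]; push_cast; ring
  have h0 : (m.factorial : ℝ) ≠ 0 := by positivity
  have h0' : ((m:ℝ)+1) ≠ 0 := by positivity
  rw [hm]; field_simp

lemma step_lemma {l ε κ : ℝ} (hl0 : 0 ≤ l) (hl1 : l ≤ 1) (hε : 0 < ε) (hκ : 0 < κ)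
    (m : ℕ) {g g' : ℝ → ℝ} {τ : ℝ} (hτ : τ = 1 ∨ τ = -1)
    (hg : ∀ t ∈ Icc 0 l, HasDerivWithinAt g (g' t) (Icc 0 l) t)
    (h0 : -ε ≤ g 0) (hle : -ε ≤ g l)
    (hA : (∀ t ∈ Icc 0 l, κ * t ^ m / m.factorial - (m:ℝ) * ε ≤ τ * g' t) ∨
          (∀ t ∈ Icc 0 l, κ * (l - t) ^ m / m.factorial - (m:ℝ) * ε ≤ τ * g' t)) :
    (∀ t ∈ Icc 0 l, κ * t ^ (m+1) / (m+1).factorial - ((m:ℝ)+1) * ε ≤ g t) ∨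
    (∀ t ∈ Icc 0 l, κ * (l - t) ^ (m+1) / (m+1).factorial - ((m:ℝ)+1) * ε ≤ g t) := by
  have h0l : (0:ℝ) ∈ Icc 0 l := ⟨le_rfl, hl0⟩
  have hll : l ∈ Icc (0:ℝ) l := ⟨hl0, le_rfl⟩
  have hF : (0:ℝ) < (m+1).factorial := by positivity
  have key : ∀ t ∈ Icc (0:ℝ) l,
      κ * (l - t) ^ (m+1) / (m+1).factorial + κ * t ^ (m+1) / (m+1).factorial
        ≤ κ * l ^ (m+1) / (m+1).factorial := by
    intro t ht
    have h := pow_add_pow_le (x := l - t) (y := t) (n := m+1)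
      (by linarith [ht.2]) ht.1 (by omega)
    have h2 : (l - t) ^ (m+1) + t ^ (m+1) ≤ l ^ (m+1) := by
      simpa using h
    rw [← add_div, ← mul_add]
    gcongr
  have hmε : ∀ t ∈ Icc (0:ℝ) l, (m:ℝ) * ε * t ≤ (m:ℝ) * ε * l ∧ (m:ℝ) * ε * l ≤ (m:ℝ) * ε := by
    intro t ht
    have hm0 : (0:ℝ) ≤ (m:ℝ) * ε := by positivity
    constructor
    · exact mul_le_mul_of_nonneg_left ht.2 hm0
    · nlinarith
  rcases hτ with hτ | hτ <;> subst hτ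
  · -- g' bounded below
    simp only [one_mul] at hA
    rcases hA with hA | hA
    · -- P1 forward: conclude left
      left
      intro t ht
      have hmono := mono_aux hg
        (fun t ht => (deriv_P1 κ ε m t).hasDerivWithinAt) hA h0l ht ht.1
      simp only at hmono
      have e0 : κ * (0:ℝ) ^ (m+1) / (m+1).factorial - (m:ℝ) * ε * 0 = 0 := by
        simp
      rw [e0] at hmono
      have := (hmε t ht).1
      have := (hmε t ht).2
      linarith
    · -- P2 forward: conclude left
      left
      intro t ht
      have hmono := mono_aux hg
        (fun t ht => (deriv_P2 κ ε l m t).hasDerivWithinAt) hA h0l ht ht.1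
      simp only at hmono
      have e0 : -(κ * (l - (0:ℝ)) ^ (m+1) / (m+1).factorial) - (m:ℝ) * ε * 0
          = -(κ * l ^ (m+1) / (m+1).factorial) := by simp
      rw [e0] at hmono
      have hk := key t ht
      have := (hmε t ht).1
      have := (hmε t ht).2
      linarith
  · -- g' bounded above by negatives
    rcases hA with hA | hA
    · -- conclude right, integrate backwards, φ = -P1
      right
      intro t ht
      have hmono := mono_aux (g := fun x => -(κ * x ^ (m+1) / (m+1).factorial - (m:ℝ) * ε * x))
        (g' := fun x => -(κ * x ^ m / m.factorial - (m:ℝ) * ε))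
        (φ := g) (φ' := g')
        (fun t ht => ((deriv_P1 κ ε m t).hasDerivWithinAt).neg)
        hg
        (fun t ht => by have := hA t ht; linarith)
        ht hll ht.2
      simp only at hmono
      have hk := key t ht
      have := (hmε t ht).1
      have := (hmε t ht).2
      have hmt : 0 ≤ (m:ℝ) * ε * t := mul_nonneg (by positivity) ht.1
      linarith
    · -- conclude right, φ = -P2
      right
      intro t ht
      have hmono := mono_aux
        (g := fun x => -(-(κ * (l - x) ^ (m+1) / (m+1).factorial) - (m:ℝ) * ε * x))
        (g' := fun x => -(κ * (l - x) ^ m / m.factorial - (m:ℝ) * ε))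
        (φ := g) (φ' := g')
        (fun t ht => ((deriv_P2 κ ε l m t).hasDerivWithinAt).neg)
        hg
        (fun t ht => by have := hA t ht; linarith)
        ht hll ht.2
      simp only at hmono
      have e0 : l - l = (0:ℝ) := by ring
      rw [e0] at hmono
      simp only [zero_pow (Nat.succ_ne_zero m), mul_zero, zero_div] at hmono
      have := (hmε t ht).1
      have := (hmε t ht).2
      have hmt : 0 ≤ (m:ℝ) * ε * t := mul_nonneg (by positivity) ht.1
      linarith

/-- if `σ_j f^{(j)} ≥ -ε` at both endpoints of `[0, l]` for `1 ≤ j ≤ k-1`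
and `|f^{(k)}| ≥ κ` on `[0, l]`, then either `σ_1 f'(t) ≥ κ t^{k-1}/(k-1)! - (k-1)ε` for
all `t ∈ [0, l]`, or `σ_1 f'(t) ≥ κ (l-t)^{k-1}/(k-1)! - (k-1)ε` for all `t ∈ [0, l]`. -/
theorem first_derivative_dichotomy (k : ℕ) (hk : 2 ≤ k) (l : ℝ)
    (hl0 : 0 ≤ l) (hl1 : l ≤ 1)
    (f : ℝ → ℝ) (hf : ContDiffOn ℝ k f (Icc 0 l))
    (σ : ℕ → ℝ) (hσ : ∀ j, 1 ≤ j → j ≤ k - 1 → σ j = 1 ∨ σ j = -1)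
    (ε κ : ℝ) (hε : 0 < ε) (hκ : 0 < κ)
    (hend : ∀ j, 1 ≤ j → j ≤ k - 1 →
      -ε ≤ σ j * iteratedDerivWithin j f (Icc 0 l) 0 ∧
      -ε ≤ σ j * iteratedDerivWithin j f (Icc 0 l) l)
    (hfk : ∀ t ∈ Icc 0 l, κ ≤ |iteratedDerivWithin k f (Icc 0 l) t|) :
    (∀ t ∈ Icc 0 l,
      κ * t ^ (k - 1) / (Nat.factorial (k - 1)) - ((k : ℝ) - 1) * ε ≤
        σ 1 * iteratedDerivWithin 1 f (Icc 0 l) t) ∨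
    (∀ t ∈ Icc 0 l,
      κ * (l - t) ^ (k - 1) / (Nat.factorial (k - 1)) - ((k : ℝ) - 1) * ε ≤
        σ 1 * iteratedDerivWithin 1 f (Icc 0 l) t) := by
  have hk2 : (2:ℝ) ≤ (k:ℝ) := by exact_mod_cast hk
  -- trivial case l = 0
  rcases eq_or_lt_of_le hl0 with hl | hl
  · left
    intro t ht
    have ht0 : t = 0 := le_antisymm (hl ▸ ht.2) ht.1
    subst ht0
    have h1 := (hend 1 le_rfl (by omega)).1
    have hz : (0:ℝ) ^ (k-1) = 0 := zero_pow (by omega)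
    rw [hz]
    have hfp : (0:ℝ) < (Nat.factorial (k-1) : ℝ) := by positivity
    rw [mul_zero, zero_div]
    nlinarith
  -- now l > 0
  have hUD : UniqueDiffOn ℝ (Icc (0:ℝ) l) := uniqueDiffOn_Icc hl
  have hder : ∀ j : ℕ, j + 1 ≤ k → ∀ t ∈ Icc (0:ℝ) l,
      HasDerivWithinAt (iteratedDerivWithin j f (Icc 0 l))
        (iteratedDerivWithin (j+1) f (Icc 0 l) t) (Icc 0 l) t := by
    intro j hj t ht
    have hd : DifferentiableWithinAt ℝ (iteratedDerivWithin j f (Icc 0 l)) (Icc 0 l) t := by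
      apply (hf.differentiableOn_iteratedDerivWithin _ hUD) t ht
      exact_mod_cast hj
    have := hd.hasDerivWithinAt
    rwa [← iteratedDerivWithin_succ] at this
  -- constant sign of the k-th derivative
  have hsign : (∀ t ∈ Icc (0:ℝ) l, κ ≤ iteratedDerivWithin k f (Icc 0 l) t) ∨
      (∀ t ∈ Icc (0:ℝ) l, κ ≤ -iteratedDerivWithin k f (Icc 0 l) t) := by
    set F := iteratedDerivWithin k f (Icc 0 l) with hF
    have hFc : ContinuousOn F (Icc 0 l) := hf.continuousOn_iteratedDerivWithin le_rfl hUD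
    by_contra hcon
    push_neg at hcon
    obtain ⟨⟨a, ha, ha2⟩, ⟨b, hb, hb2⟩⟩ := hcon
    have hFa : F a ≤ -κ := by
      have := hfk a ha
      rcases abs_cases (F a) with ⟨h1, _⟩ | ⟨h1, _⟩ <;> linarith
    have hFb : κ ≤ F b := by
      have := hfk b hb
      rcases abs_cases (F b) with ⟨h1, _⟩ | ⟨h1, _⟩ <;> linarith
    have hsub : uIcc a b ⊆ Icc (0:ℝ) l := by
      rw [uIcc]
      exact Icc_subset_Icc (le_inf ha.1 hb.1) (sup_le ha.2 hb.2)
    have h0mem : (0:ℝ) ∈ uIcc (F a) (F b) := by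
      rw [mem_uIcc]
      left; constructor <;> linarith
    obtain ⟨c, hc, hc0⟩ := intermediate_value_uIcc (hFc.mono hsub) h0mem
    have h2 := hfk c (hsub hc)
    rw [show F c = 0 from hc0, abs_zero] at h2
    linarith
  -- main downward induction
  have main : ∀ n : ℕ, ∀ j : ℕ, 1 ≤ j → j + n = k - 1 →
      (∀ t ∈ Icc (0:ℝ) l, κ * t ^ (n+1) / ((n+1).factorial) - ((n:ℝ)+1) * ε ≤
          σ j * iteratedDerivWithin j f (Icc 0 l) t) ∨
      (∀ t ∈ Icc (0:ℝ) l, κ * (l - t) ^ (n+1) / ((n+1).factorial) - ((n:ℝ)+1) * ε ≤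
          σ j * iteratedDerivWithin j f (Icc 0 l) t) := by
    intro n
    induction n with
    | zero =>
      intro j hj1 hj2
      have hjk : j + 1 = k := by omega
      have hsq : σ j * σ j = 1 := by
        rcases hσ j hj1 (by omega) with h | h <;> rw [h] <;> norm_num
      have hg : ∀ t ∈ Icc (0:ℝ) l,
          HasDerivWithinAt (fun x => σ j * iteratedDerivWithin j f (Icc 0 l) x)
            (σ j * iteratedDerivWithin (j+1) f (Icc 0 l) t) (Icc 0 l) t :=
        fun t ht => (hder j (by omega) t ht).const_mul (σ j)
      rcases hsign with hs | hs
      · have := step_lemma (g' := fun t => σ j * iteratedDerivWithin (j+1) f (Icc 0 l) t)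
          hl0 hl1 hε hκ 0 (τ := σ j) (hσ j hj1 (by omega)) hg
          (hend j hj1 (by omega)).1 (hend j hj1 (by omega)).2
          (Or.inl ?_)
        · simpa using this
        · intro t ht
          have hst := hs t ht
          rw [hjk]
          have : σ j * (σ j * iteratedDerivWithin k f (Icc 0 l) t)
              = iteratedDerivWithin k f (Icc 0 l) t := by
            rw [← mul_assoc, hsq, one_mul]
          rw [this]
          simp [Nat.factorial]
          linarith
      · have hτ : -σ j = 1 ∨ -σ j = -1 := by
          rcases hσ j hj1 (by omega) with h | h <;> rw [h] <;> norm_num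
        have := step_lemma (g' := fun t => σ j * iteratedDerivWithin (j+1) f (Icc 0 l) t)
          hl0 hl1 hε hκ 0 (τ := -σ j) hτ hg
          (hend j hj1 (by omega)).1 (hend j hj1 (by omega)).2
          (Or.inl ?_)
        · simpa using this
        · intro t ht
          have hst := hs t ht
          rw [hjk]
          have : -σ j * (σ j * iteratedDerivWithin k f (Icc 0 l) t)
              = -iteratedDerivWithin k f (Icc 0 l) t := by
            rw [show -σ j * (σ j * iteratedDerivWithin k f (Icc 0 l) t)
              = -((σ j * σ j) * iteratedDerivWithin k f (Icc 0 l) t) by ring, hsq, one_mul]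
          rw [this]
          simp [Nat.factorial]
          linarith
    | succ n ih =>
      intro j hj1 hj2
      have IH := ih (j+1) (by omega) (by omega)
      have hsq : σ j * σ j = 1 := by
        rcases hσ j hj1 (by omega) with h | h <;> rw [h] <;> norm_num
      have hτ : σ j * σ (j+1) = 1 ∨ σ j * σ (j+1) = -1 := by
        rcases hσ j hj1 (by omega) with h | h <;>
          rcases hσ (j+1) (by omega) (by omega) with h' | h' <;> rw [h, h'] <;> norm_num
      have hg : ∀ t ∈ Icc (0:ℝ) l,
          HasDerivWithinAt (fun x => σ j * iteratedDerivWithin j f (Icc 0 l) x)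
            (σ j * iteratedDerivWithin (j+1) f (Icc 0 l) t) (Icc 0 l) t :=
        fun t ht => (hder j (by omega) t ht).const_mul (σ j)
      have hcalc : ∀ X : ℝ, (σ j * σ (j+1)) * (σ j * X) = σ (j+1) * X := by
        intro X
        rw [show (σ j * σ (j+1)) * (σ j * X) = (σ j * σ j) * (σ (j+1) * X) by ring, hsq, one_mul]
      have hstep := step_lemma (g' := fun t => σ j * iteratedDerivWithin (j+1) f (Icc 0 l) t)
        hl0 hl1 hε hκ (n+1) (τ := σ j * σ (j+1)) hτ hg
        (hend j hj1 (by omega)).1 (hend j hj1 (by omega)).2 ?_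
      · rcases hstep with h | h
        · left; intro t ht; have := h t ht; push_cast at this ⊢; linarith
        · right; intro t ht; have := h t ht; push_cast at this ⊢; linarith
      · rcases IH with h | h
        · left
          intro t ht
          rw [hcalc]
          have := h t ht
          push_cast at this ⊢
          linarith
        · right
          intro t ht
          rw [hcalc]
          have := h t ht
          push_cast at this ⊢
          linarith
  have hres := main (k-2) 1 le_rfl (by omega)
  have he : k - 2 + 1 = k - 1 := by omega
  have hc : ((k-2:ℕ):ℝ) + 1 = (k:ℝ) - 1 := by
    have : ((k-2:ℕ):ℝ) = (k:ℝ) - 2 := by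
      push_cast [Nat.cast_sub hk]; ring
    rw [this]; ring
  rw [he, hc] at hres
  exact hres
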